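/- Let K be a planar convex body whose boundary is C² with curvature everywhere strictly greater than 1 (so that a unit disc cannot roll outside without separating). For any nonempty disc-cap D = K \ (int(B²) + p) there exists a unique boundary point x₀ ∈ ∂K ∩ ∂D and a unique t ≥ 0 such that B² + p = B² + x₀ − (1+t)·u_{x₀}, where u_{x₀} is the outer unit normal of K at x₀. -/

import Mathlib

open Metric Set intervalIntegral
open scoped RealInnerProductSpace


/-- Second derivative test at a global max. -/
lemma second_deriv_nonpos_of_max {f : ℝ → ℝ} (hf : ContDiff ℝ 2 f) {s : ℝ}
    (hmax : ∀ t, f t ≤ f s) : deriv (deriv f) s ≤ 0 := by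
  by_contra hpos
  push_neg at hpos
  have hf1 : ContDiff ℝ 1 (deriv f) := by
    have := (contDiff_succ_iff_deriv (n := 1)).mp (by exact_mod_cast hf)
    exact this.2.2
  have hdf : Differentiable ℝ f := ((contDiff_succ_iff_deriv (n := 1)).mp (by exact_mod_cast hf)).1
  have hdf' : Continuous (deriv f) := hf1.continuous
  have hcont2 : Continuous (deriv (deriv f)) := by
    have := (contDiff_succ_iff_deriv (n := 0)).mp (by exact_mod_cast hf1)
    exact this.2.2.continuous
  have hev : ∀ᶠ τ in nhds s, 0 < deriv (deriv f) τ :=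
    (hcont2.continuousAt (x := s)).eventually_const_lt hpos
  obtain ⟨δ, hδ, hball⟩ := Metric.eventually_nhds_iff_ball.mp hev
  -- deriv f is strictly monotone on Icc s (s+δ/2)
  have hsub : Set.Icc s (s + δ/2) ⊆ Metric.ball s δ := by
    intro τ hτ
    rw [Metric.mem_ball, Real.dist_eq, abs_lt]
    constructor <;> [linarith [hτ.1]; linarith [hτ.2]]
  have hmono1 : StrictMonoOn (deriv f) (Set.Icc s (s + δ/2)) := by
    apply strictMonoOn_of_deriv_pos (convex_Icc _ _) (hdf'.continuousOn)
    intro x hx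
    rw [interior_Icc] at hx
    exact hball x (hsub ⟨le_of_lt hx.1, le_of_lt hx.2⟩)
  have hds : deriv f s = 0 := by
    apply IsLocalMax.deriv_eq_zero
    exact Filter.Eventually.of_forall (fun t => hmax t)
  have hmono2 : StrictMonoOn f (Set.Icc s (s + δ/2)) := by
    apply strictMonoOn_of_deriv_pos (convex_Icc _ _) (hdf.continuous.continuousOn)
    intro x hx
    rw [interior_Icc] at hx
    have : deriv f s < deriv f x := hmono1 (by constructor <;> simp [le_refl]; positivity)
      ⟨le_of_lt hx.1, le_of_lt hx.2⟩ hx.1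
    linarith [hds ▸ this]
  have : f s < f (s + δ/2) := hmono2 (by constructor <;> simp; positivity)
    (by constructor <;> simp; positivity) (by linarith)
  exact absurd (hmax (s + δ/2)) (not_le.mpr this)

/-- Any point on the unit circle has an angle. -/
lemma exists_angle {x y : ℝ} (h : x^2 + y^2 = 1) : ∃ ψ, Real.cos ψ = x ∧ Real.sin ψ = y := by
  have hx1 : -1 ≤ x := by nlinarith
  have hx2 : x ≤ 1 := by nlinarith
  have hc : Real.cos (Real.arccos x) = x := Real.cos_arccos hx1 hx2
  have hs : Real.sin (Real.arccos x) = Real.sqrt (1 - x^2) := Real.sin_arccos x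
  have hy2 : y^2 = 1 - x^2 := by linarith
  rcases le_or_gt 0 y with hy | hy
  · exact ⟨Real.arccos x, hc, by rw [hs, hy2.symm, Real.sqrt_sq hy]⟩
  · refine ⟨-Real.arccos x, by rw [Real.cos_neg]; exact hc, ?_⟩
    rw [Real.sin_neg, hs, hy2.symm, Real.sqrt_sq_eq_abs, abs_of_neg hy, neg_neg]

lemma b_integral_formula
    (κ a b C S : ℝ → ℝ) (s₀ : ℝ)
    (hκc : Continuous κ)
    (ha : ∀ s, HasDerivAt a (1 - κ s * b s) s)
    (hb : ∀ s, HasDerivAt b (κ s * a s) s)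
    (hC : ∀ s, HasDerivAt C (-(κ s * S s)) s)
    (hS : ∀ s, HasDerivAt S (κ s * C s) s)
    (hCS : ∀ s, C s ^ 2 + S s ^ 2 = 1)
    (ha0 : a s₀ = 0) (hb0 : b s₀ = 1) (hC0 : C s₀ = 1) (hS0 : S s₀ = 0) :
    ∀ s, b s - 1 = ∫ τ in s₀..s, (1 - κ τ) * (C τ * S s - S τ * C s) := by
  have hCc : Continuous C := continuous_iff_continuousAt.mpr (fun s => (hC s).differentiableAt.continuousAt)
  have hSc : Continuous S := continuous_iff_continuousAt.mpr (fun s => (hS s).differentiableAt.continuousAt)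
  have hf1c : Continuous (fun τ => (1 - κ τ) * C τ) := by continuity
  have hf2c : Continuous (fun τ => (1 - κ τ) * S τ) := by continuity
  -- the two Wronskian-type functions
  set Λ₁ : ℝ → ℝ := fun s => a s * C s + (b s - 1) * S s with hΛ₁def
  set Λ₂ : ℝ → ℝ := fun s => a s * S s - (b s - 1) * C s with hΛ₂def
  have hdΛ₁ : ∀ s, HasDerivAt Λ₁ ((1 - κ s) * C s) s := by
    intro s
    have h := (((ha s).mul (hC s)).add (((hb s).sub_const 1).mul (hS s)))
    refine h.congr_deriv ?_
    symm
    ring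
  have hdΛ₂ : ∀ s, HasDerivAt Λ₂ ((1 - κ s) * S s) s := by
    intro s
    have h := (((ha s).mul (hS s)).sub (((hb s).sub_const 1).mul (hC s)))
    refine h.congr_deriv ?_
    symm
    ring
  have key : ∀ (f Λ : ℝ → ℝ), Continuous f → (∀ s, HasDerivAt Λ (f s) s) → Λ s₀ = 0 →
      ∀ s, Λ s = ∫ τ in s₀..s, f τ := by
    intro f Λ hfc hdΛ hΛ0 s
    have hInt : ∀ s, HasDerivAt (fun r => ∫ τ in s₀..r, f τ) (f s) s := by
      intro s
      exact integral_hasDerivAt_right (hfc.intervalIntegrable _ _)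
        (hfc.stronglyMeasurableAtFilter _ _) hfc.continuousAt
    have hdiff : Differentiable ℝ (fun r => Λ r - ∫ τ in s₀..r, f τ) :=
      fun r => ((hdΛ r).sub (hInt r)).differentiableAt
    have hconst := is_const_of_deriv_eq_zero hdiff (fun r => by
      rw [show (fun r => Λ r - ∫ τ in s₀..r, f τ) = Λ - fun r => ∫ τ in s₀..r, f τ from rfl,
        ((hdΛ r).sub (hInt r)).deriv]; ring) s s₀
    simp only [hΛ0, intervalIntegral.integral_same, sub_zero, sub_self] at hconst
    linarith [hconst]
  have h1 := key _ _ hf1c hdΛ₁ (by simp [hΛ₁def, ha0, hb0, hS0])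
  have h2 := key _ _ hf2c hdΛ₂ (by simp [hΛ₂def, ha0, hb0, hC0])
  intro s
  have hb1 : b s - 1 = Λ₁ s * S s - Λ₂ s * C s := by
    simp only [hΛ₁def, hΛ₂def]
    linear_combination (1 - b s) * hCS s
  rw [hb1, h1 s, h2 s, ← intervalIntegral.integral_mul_const, ← intervalIntegral.integral_mul_const,
    ← intervalIntegral.integral_sub ((hf1c.intervalIntegrable _ _).mul_const _)
      ((hf2c.intervalIntegrable _ _).mul_const _)]
  congr 1
  funext τ
  ring


set_option maxHeartbeats 2000000 in
/-- Every nonempty disc-cap `D = K \ (int B² + p)` of a planar convex body `K` with `C²`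
boundary of curvature `> 1` everywhere has a unique vertex `x₀ ∈ ∂K ∩ ∂D` and height
`t ≥ 0` with `B² + p = B² + x₀ - (1+t)·u_{x₀}`.
The boundary is encoded by a `C²` unit-speed parametrization `γ` with curvature `κ`,
and `u` is the outer unit normal map, characterized by the supporting property. -/
theorem disc_cap_vertex_unique
    (K : Set (EuclideanSpace ℝ (Fin 2)))
    (hKcomp : IsCompact K) (hKconv : Convex ℝ K) (hKint : (interior K).Nonempty)
    (γ : ℝ → EuclideanSpace ℝ (Fin 2)) (hγ : ContDiff ℝ 2 γ)
    (hγspeed : ∀ s, ‖deriv γ s‖ = 1)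
    (hγrange : frontier K = Set.range γ)
    (κ : ℝ → ℝ)
    (hκdef : ∀ s, κ s =
      deriv γ s 0 * deriv (deriv γ) s 1 - deriv γ s 1 * deriv (deriv γ) s 0)
    (hκ : ∀ s, 1 < κ s)
    (u : EuclideanSpace ℝ (Fin 2) → EuclideanSpace ℝ (Fin 2))
    (hu : ∀ x ∈ frontier K, ‖u x‖ = 1 ∧ ∀ y ∈ K, ⟪y - x, u x⟫ ≤ 0)
    (huniq : ∀ x ∈ frontier K, ∀ v, ‖v‖ = 1 → (∀ y ∈ K, ⟪y - x, v⟫ ≤ 0) → v = u x)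
    (p : EuclideanSpace ℝ (Fin 2))
    (hD : (K \ ball p 1).Nonempty) :
    ∃! q : EuclideanSpace ℝ (Fin 2) × ℝ,
      q.1 ∈ frontier K ∩ frontier (K \ ball p 1) ∧ 0 ≤ q.2 ∧
        p = q.1 - (1 + q.2) • u q.1 := by
  have hKclosed : IsClosed K := hKcomp.isClosed
  have hfrK : frontier K ⊆ K := hKclosed.frontier_subset
  -- coordinate and derivative machinery
  have hinner : ∀ x y : EuclideanSpace ℝ (Fin 2), ⟪x, y⟫ = x 0 * y 0 + x 1 * y 1 := by
    intro x y
    simp [PiLp.inner_apply, RCLike.inner_apply, Fin.sum_univ_two]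
    ring
  have hcn : ∀ w : EuclideanSpace ℝ (Fin 2), ‖w‖ ^ 2 = w 0 ^ 2 + w 1 ^ 2 := by
    intro w
    rw [EuclideanSpace.norm_eq, Fin.sum_univ_two, Real.norm_eq_abs, Real.norm_eq_abs,
      Real.sq_sqrt (by positivity), sq_abs, sq_abs]
  have hγdiff : Differentiable ℝ γ := hγ.differentiable (by norm_num)
  have hγd1 : ContDiff ℝ 1 (deriv γ) := by
    have h := (contDiff_succ_iff_deriv (n := 1)).mp (by exact_mod_cast hγ)
    exact h.2.2
  have hγ'diff : Differentiable ℝ (deriv γ) := hγd1.differentiable (by norm_num)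
  have hγ''cont : Continuous (deriv (deriv γ)) := by
    have h := (contDiff_succ_iff_deriv (n := 0)).mp (by exact_mod_cast hγd1)
    exact h.2.2.continuous
  have hproj : ∀ (i : Fin 2) (f : ℝ → EuclideanSpace ℝ (Fin 2)) (s : ℝ)
      (f' : EuclideanSpace ℝ (Fin 2)), HasDerivAt f f' s →
      HasDerivAt (fun τ => f τ i) (f' i) s := by
    intro i f s f' hf
    have := (EuclideanSpace.proj (𝕜 := ℝ) i).hasFDerivAt.comp_hasDerivAt s hf
    exact this
  set T0 : ℝ → ℝ := fun s => deriv γ s 0 with hT0def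
  set T1 : ℝ → ℝ := fun s => deriv γ s 1 with hT1def
  set N0 : ℝ → ℝ := fun s => deriv (deriv γ) s 0 with hN0def
  set N1 : ℝ → ℝ := fun s => deriv (deriv γ) s 1 with hN1def
  have hg0 : ∀ s, HasDerivAt (fun τ => γ τ 0) (T0 s) s :=
    fun s => hproj 0 γ s _ (hγdiff s).hasDerivAt
  have hg1 : ∀ s, HasDerivAt (fun τ => γ τ 1) (T1 s) s :=
    fun s => hproj 1 γ s _ (hγdiff s).hasDerivAt
  have hT0' : ∀ s, HasDerivAt T0 (N0 s) s :=
    fun s => hproj 0 (deriv γ) s _ (hγ'diff s).hasDerivAt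
  have hT1' : ∀ s, HasDerivAt T1 (N1 s) s :=
    fun s => hproj 1 (deriv γ) s _ (hγ'diff s).hasDerivAt
  have hT0c : Continuous T0 := (EuclideanSpace.proj (𝕜 := ℝ) (0 : Fin 2)).continuous.comp hγd1.continuous
  have hT1c : Continuous T1 := (EuclideanSpace.proj (𝕜 := ℝ) (1 : Fin 2)).continuous.comp hγd1.continuous
  have hN0c : Continuous N0 := (EuclideanSpace.proj (𝕜 := ℝ) (0 : Fin 2)).continuous.comp hγ''cont
  have hN1c : Continuous N1 := (EuclideanSpace.proj (𝕜 := ℝ) (1 : Fin 2)).continuous.comp hγ''cont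
  have hκc : Continuous κ := by
    have h : κ = fun s => T0 s * N1 s - T1 s * N0 s := funext hκdef
    rw [h]
    exact ((hT0c.mul hN1c).sub (hT1c.mul hN0c))
  have hgc : ∀ i : Fin 2, ContDiff ℝ 2 (fun s => γ s i) :=
    fun i => (EuclideanSpace.proj (𝕜 := ℝ) i).contDiff.comp hγ
  have hunit : ∀ s, T0 s ^ 2 + T1 s ^ 2 = 1 := by
    intro s
    have h := hγspeed s
    have h2 : ‖deriv γ s‖ ^ 2 = 1 := by rw [h]; norm_num
    rw [hcn] at h2
    exact h2
  have horth : ∀ s, T0 s * N0 s + T1 s * N1 s = 0 := by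
    intro s
    have hd : HasDerivAt (fun τ => T0 τ ^ 2 + T1 τ ^ 2)
        (2 * T0 s * N0 s + 2 * T1 s * N1 s) s := by
      have h := (((hT0' s).pow 2).add ((hT1' s).pow 2))
      refine h.congr_deriv ?_
      symm
      ring
    have hconst : (fun τ => T0 τ ^ 2 + T1 τ ^ 2) = fun _ => (1:ℝ) := funext hunit
    have h0 : deriv (fun τ => T0 τ ^ 2 + T1 τ ^ 2) s = 0 := by rw [hconst]; simp
    rw [hd.deriv] at h0
    linarith
  have hN0e : ∀ s, N0 s = -(κ s * T1 s) := by
    intro s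
    have h1 : κ s = T0 s * N1 s - T1 s * N0 s := hκdef s
    linear_combination T1 s * h1 + T0 s * horth s - N0 s * hunit s
  have hN1e : ∀ s, N1 s = κ s * T0 s := by
    intro s
    have h1 : κ s = T0 s * N1 s - T1 s * N0 s := hκdef s
    linear_combination (- T0 s) * h1 + T1 s * horth s - N1 s * hunit s
  -- the outer normal is (T1, -T0)
  have husn : ∀ s, u (γ s) 0 = T1 s ∧ u (γ s) 1 = -(T0 s) := by
    intro s
    have hxfr : γ s ∈ frontier K := by rw [hγrange]; exact Set.mem_range_self s
    obtain ⟨hwnorm, hwsupp⟩ := hu (γ s) hxfr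
    set w0 : ℝ := u (γ s) 0 with hw0def
    set w1 : ℝ := u (γ s) 1 with hw1def
    have hwunit : w0 ^ 2 + w1 ^ 2 = 1 := by
      have h2 : ‖u (γ s)‖ ^ 2 = 1 := by rw [hwnorm]; norm_num
      rw [hcn] at h2
      exact h2
    set G : ℝ → ℝ := fun τ => γ τ 0 * w0 + γ τ 1 * w1 with hGdef
    have hGmax : ∀ τ, G τ ≤ G s := by
      intro τ
      have hτK : γ τ ∈ K := hfrK (by rw [hγrange]; exact Set.mem_range_self τ)
      have h := hwsupp (γ τ) hτK
      rw [hinner] at h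
      simp only [PiLp.sub_apply] at h
      simp only [hGdef]
      nlinarith [h]
    have hGC2 : ContDiff ℝ 2 G := ((hgc 0).mul contDiff_const).add ((hgc 1).mul contDiff_const)
    have hG' : ∀ τ, HasDerivAt G (T0 τ * w0 + T1 τ * w1) τ := by
      intro τ
      have h := ((hg0 τ).mul_const w0).add ((hg1 τ).mul_const w1)
      exact h
    have hGd1 : deriv G s = 0 := by
      apply IsLocalMax.deriv_eq_zero
      exact Filter.Eventually.of_forall hGmax
    have horthw : T0 s * w0 + T1 s * w1 = 0 := by
      rw [(hG' s).deriv] at hGd1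
      exact hGd1
    have hderivG : deriv G = fun τ => T0 τ * w0 + T1 τ * w1 := funext fun τ => (hG' τ).deriv
    have hsec : N0 s * w0 + N1 s * w1 ≤ 0 := by
      have h := second_deriv_nonpos_of_max hGC2 hGmax
      rw [hderivG] at h
      rw [show (fun τ => T0 τ * w0 + T1 τ * w1) = (fun y => T0 y * w0) + (fun y => T1 y * w1)
        from rfl] at h
      rwa [(((hT0' s).mul_const w0).add ((hT1' s).mul_const w1)).deriv] at h
    have hκs := hκ s
    have h5 : T0 s * w1 - T1 s * w0 ≤ 0 := by
      have he : N0 s * w0 + N1 s * w1 = κ s * (T0 s * w1 - T1 s * w0) := by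
        rw [hN0e s, hN1e s]; ring
      nlinarith [hsec, he]
    have hsq : (T1 s * w0 - T0 s * w1) ^ 2 = 1 := by
      linear_combination (w0 ^ 2 + w1 ^ 2) * hunit s + hwunit -
        (T0 s * w0 + T1 s * w1) * horthw
    have hD1 : T1 s * w0 - T0 s * w1 = 1 := by
      have hfac : (T1 s * w0 - T0 s * w1 - 1) * (T1 s * w0 - T0 s * w1 + 1) = 0 := by
        linear_combination hsq
      rcases mul_eq_zero.mp hfac with h | h
      · linarith
      · linarith
    constructor
    · show w0 = T1 s
      linear_combination T1 s * hD1 + T0 s * horthw - w0 * hunit s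
    · show w1 = -(T0 s)
      linear_combination (- T0 s) * hD1 + T1 s * horthw - w1 * hunit s
  -- strict Blaschke rolling bound
  have hB : ∀ s₀ : ℝ, ∀ z ∈ K, z ≠ γ s₀ → ‖z - (γ s₀ - u (γ s₀))‖ < 1 := by
    intro s₀ z hzK hzne
    obtain ⟨θ₀, hθ₀c, hθ₀s⟩ := exists_angle (hunit s₀)
    set Θ : ℝ → ℝ := fun s => ∫ τ in s₀..s, κ τ with hΘdef
    have hΘd : ∀ s, HasDerivAt Θ (κ s) s := fun s =>
      intervalIntegral.integral_hasDerivAt_right (hκc.intervalIntegrable _ _)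
        (hκc.stronglyMeasurableAtFilter _ _) hκc.continuousAt
    have hΘ0 : Θ s₀ = 0 := intervalIntegral.integral_same
    have hΘc : Continuous Θ :=
      continuous_iff_continuousAt.mpr (fun s => (hΘd s).differentiableAt.continuousAt)
    have hΘmono : StrictMono Θ := by
      apply strictMono_of_deriv_pos
      intro x
      rw [(hΘd x).deriv]
      linarith [hκ x]
    -- tangent angle representation
    have hTθ : ∀ s, T0 s = Real.cos (θ₀ + Θ s) ∧ T1 s = Real.sin (θ₀ + Θ s) := by
      have hcosd : ∀ s, HasDerivAt (fun r => Real.cos (θ₀ + Θ r))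
          (-(κ s * Real.sin (θ₀ + Θ s))) s := by
        intro s
        have h1 : HasDerivAt (fun r => θ₀ + Θ r) (κ s) s := (hΘd s).const_add θ₀
        have h2 := (Real.hasDerivAt_cos (θ₀ + Θ s)).comp s h1
        refine h2.congr_deriv ?_
        symm
        ring
      have hsind : ∀ s, HasDerivAt (fun r => Real.sin (θ₀ + Θ r))
          (κ s * Real.cos (θ₀ + Θ s)) s := by
        intro s
        have h1 : HasDerivAt (fun r => θ₀ + Θ r) (κ s) s := (hΘd s).const_add θ₀
        have h2 := (Real.hasDerivAt_sin (θ₀ + Θ s)).comp s h1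
        refine h2.congr_deriv ?_
        symm
        ring
      set φ : ℝ → ℝ := fun s => T0 s * Real.cos (θ₀ + Θ s) + T1 s * Real.sin (θ₀ + Θ s)
        with hφdef
      have hφd : ∀ s, HasDerivAt φ 0 s := by
        intro s
        have h := ((hT0' s).mul (hcosd s)).add ((hT1' s).mul (hsind s))
        refine h.congr_deriv ?_
        symm
        rw [hN0e s, hN1e s]
        ring
      have hφconst : ∀ s, φ s = 1 := by
        intro s
        have hc := is_const_of_deriv_eq_zero (fun r => (hφd r).differentiableAt)
          (fun r => (hφd r).deriv) s s₀
        rw [hc]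
        simp only [hφdef, hΘ0, add_zero, hθ₀c, hθ₀s]
        linear_combination hunit s₀
      intro s
      have hpyth := Real.sin_sq_add_cos_sq (θ₀ + Θ s)
      have hφs := hφconst s
      simp only [hφdef] at hφs
      have h1 : (T0 s - Real.cos (θ₀ + Θ s)) ^ 2 + (T1 s - Real.sin (θ₀ + Θ s)) ^ 2 = 0 := by
        nlinarith [hunit s]
      constructor
      · nlinarith [sq_nonneg (T0 s - Real.cos (θ₀ + Θ s)),
          sq_nonneg (T1 s - Real.sin (θ₀ + Θ s))]
      · nlinarith [sq_nonneg (T0 s - Real.cos (θ₀ + Θ s)),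
          sq_nonneg (T1 s - Real.sin (θ₀ + Θ s))]
    -- the rolling tangent circle center
    set c : EuclideanSpace ℝ (Fin 2) := γ s₀ - u (γ s₀) with hcdef
    have hc0 : γ s₀ 0 - c 0 = T1 s₀ := by
      simp only [hcdef, PiLp.sub_apply, (husn s₀).1]
      ring
    have hc1 : γ s₀ 1 - c 1 = -(T0 s₀) := by
      simp only [hcdef, PiLp.sub_apply, (husn s₀).2]
      ring
    set a : ℝ → ℝ := fun s => (γ s 0 - c 0) * T0 s + (γ s 1 - c 1) * T1 s with hadef
    set b : ℝ → ℝ := fun s => (γ s 0 - c 0) * T1 s - (γ s 1 - c 1) * T0 s with hbdef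
    have had : ∀ s, HasDerivAt a (1 - κ s * b s) s := by
      intro s
      have h := (((hg0 s).sub_const (c 0)).mul (hT0' s)).add
        (((hg1 s).sub_const (c 1)).mul (hT1' s))
      refine h.congr_deriv ?_
      symm
      simp only [hbdef]
      rw [hN0e s, hN1e s]
      linear_combination - hunit s
    have hbd : ∀ s, HasDerivAt b (κ s * a s) s := by
      intro s
      have h := (((hg0 s).sub_const (c 0)).mul (hT1' s)).sub
        (((hg1 s).sub_const (c 1)).mul (hT0' s))
      refine h.congr_deriv ?_
      symm
      simp only [hadef]
      rw [hN0e s, hN1e s]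
      ring
    have ha0 : a s₀ = 0 := by
      simp only [hadef]
      rw [hc0, hc1]
      ring
    have hb0 : b s₀ = 1 := by
      simp only [hbdef]
      rw [hc0, hc1]
      linear_combination hunit s₀
    set C : ℝ → ℝ := fun s => Real.cos (Θ s) with hCdef
    set S : ℝ → ℝ := fun s => Real.sin (Θ s) with hSdef
    have hCd : ∀ s, HasDerivAt C (-(κ s * S s)) s := by
      intro s
      have h := (Real.hasDerivAt_cos (Θ s)).comp s (hΘd s)
      refine h.congr_deriv ?_
      symm
      simp only [hSdef]
      ring
    have hSd : ∀ s, HasDerivAt S (κ s * C s) s := by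
      intro s
      have h := (Real.hasDerivAt_sin (Θ s)).comp s (hΘd s)
      refine h.congr_deriv ?_
      symm
      simp only [hCdef]
      ring
    have hCS : ∀ s, C s ^ 2 + S s ^ 2 = 1 := by
      intro s
      simp only [hCdef, hSdef]
      rw [add_comm]
      exact Real.sin_sq_add_cos_sq (Θ s)
    have hbif := b_integral_formula κ a b C S s₀ hκc had hbd hCd hSd hCS ha0 hb0
      (by simp [hCdef, hΘ0]) (by simp [hSdef, hΘ0])
    have hCc : Continuous C := Real.continuous_cos.comp hΘc
    have hSc : Continuous S := Real.continuous_sin.comp hΘc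
    -- strict bound inside the angular window
    have hbw : ∀ s, s ≠ s₀ → |Θ s| ≤ Real.pi → b s < 1 := by
      intro s hsne hsw
      rw [abs_le] at hsw
      have hsin : ∀ τ, C τ * S s - S τ * C s = Real.sin (Θ s - Θ τ) := by
        intro τ
        rw [Real.sin_sub]
        simp only [hCdef, hSdef]
        ring
      have hint : Continuous (fun τ => (1 - κ τ) * (C τ * S s - S τ * C s)) := by
        apply Continuous.mul
        · exact continuous_const.sub hκc
        · exact (hCc.mul continuous_const).sub (hSc.mul continuous_const)
      rcases lt_or_gt_of_ne hsne with hlt | hgt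
      · -- s < s₀
        have hpos : ∀ τ ∈ Set.Ioo s s₀, 0 < (1 - κ τ) * (C τ * S s - S τ * C s) := by
          intro τ hτ
          have h1 : Θ s < Θ τ := hΘmono hτ.1
          have h2 : Θ τ < 0 := by
            have := hΘmono hτ.2
            rwa [hΘ0] at this
          have hsinneg : Real.sin (Θ s - Θ τ) < 0 := by
            have h3 : 0 < Θ τ - Θ s := by linarith
            have h4 : Θ τ - Θ s < Real.pi := by linarith [hsw.1]
            have h5 := Real.sin_pos_of_pos_of_lt_pi h3 h4
            rw [show Θ s - Θ τ = -(Θ τ - Θ s) by ring, Real.sin_neg]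
            linarith
          rw [hsin τ]
          nlinarith [hκ τ]
        have hI : 0 < ∫ τ in s..s₀, (1 - κ τ) * (C τ * S s - S τ * C s) :=
          intervalIntegral.intervalIntegral_pos_of_pos_on
            (hint.intervalIntegrable _ _) hpos hlt
        have hsym : b s - 1 = -∫ τ in s..s₀, (1 - κ τ) * (C τ * S s - S τ * C s) := by
          rw [hbif s, intervalIntegral.integral_symm]
        linarith [hI, hsym]
      · -- s₀ < s
        have hpos : ∀ τ ∈ Set.Ioo s₀ s, 0 < -((1 - κ τ) * (C τ * S s - S τ * C s)) := by
          intro τ hτ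
          have h1 : 0 < Θ τ := by
            have := hΘmono hτ.1
            rwa [hΘ0] at this
          have h2 : Θ τ < Θ s := hΘmono hτ.2
          have hsinpos : 0 < Real.sin (Θ s - Θ τ) := by
            apply Real.sin_pos_of_pos_of_lt_pi
            · linarith
            · linarith [hsw.2]
          rw [hsin τ]
          nlinarith [hκ τ]
        have hI : 0 < ∫ τ in s₀..s, -((1 - κ τ) * (C τ * S s - S τ * C s)) :=
          intervalIntegral.intervalIntegral_pos_of_pos_on
            (hint.neg.intervalIntegrable _ _) hpos hgt
        rw [intervalIntegral.integral_neg] at hI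
        have := hbif s
        linarith
    have hble : ∀ s, |Θ s| ≤ Real.pi → b s ≤ 1 := by
      intro s hsw
      rcases eq_or_ne s s₀ with h | h
      · rw [h, hb0]
      · exact le_of_lt (hbw s h hsw)
    -- covering of all directions within the window
    have hcover : ∀ v : EuclideanSpace ℝ (Fin 2), v 0 ^ 2 + v 1 ^ 2 = 1 →
        ∃ s, |Θ s| ≤ Real.pi ∧ T1 s = v 0 ∧ T0 s = -(v 1) := by
      intro v hv
      obtain ⟨ψ₀, hψc, hψs⟩ := exists_angle (x := -(v 1)) (y := v 0) (by linear_combination hv)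
      have hπ : (0:ℝ) < Real.pi := Real.pi_pos
      set k : ℤ := ⌈(θ₀ - Real.pi - ψ₀) / (2 * Real.pi)⌉ with hkdef
      set ψ : ℝ := ψ₀ + k * (2 * Real.pi) with hψdef
      have hk1 : (θ₀ - Real.pi - ψ₀) / (2 * Real.pi) ≤ (k:ℝ) := Int.le_ceil _
      have hk2 : (k:ℝ) < (θ₀ - Real.pi - ψ₀) / (2 * Real.pi) + 1 := Int.ceil_lt_add_one _
      have h2π : (0:ℝ) < 2 * Real.pi := by linarith
      have hψ1 : θ₀ - Real.pi ≤ ψ := by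
        have := mul_le_mul_of_nonneg_right hk1 (le_of_lt h2π)
        rw [div_mul_cancel₀ _ (ne_of_gt h2π)] at this
        simp only [hψdef]
        linarith
      have hψ2 : ψ < θ₀ + Real.pi := by
        have := mul_lt_mul_of_pos_right hk2 h2π
        rw [add_mul, div_mul_cancel₀ _ (ne_of_gt h2π), one_mul] at this
        simp only [hψdef]
        linarith
      have hgrow : ∀ s, s₀ ≤ s → s - s₀ ≤ Θ s := by
        intro s hs
        have h0 : 0 ≤ ∫ τ in s₀..s, (κ τ - 1) :=
          intervalIntegral.integral_nonneg hs (fun r _ => by linarith [hκ r])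
        have he : ∫ τ in s₀..s, (κ τ - 1) = Θ s - (s - s₀) := by
          rw [intervalIntegral.integral_sub (hκc.intervalIntegrable _ _)
            intervalIntegrable_const, intervalIntegral.integral_const, smul_eq_mul,
            mul_one, hΘdef]
        rw [he] at h0
        linarith
      have hdecr : ∀ s, s ≤ s₀ → Θ s ≤ s - s₀ := by
        intro s hs
        have h0 : 0 ≤ ∫ τ in s..s₀, (κ τ - 1) :=
          intervalIntegral.integral_nonneg hs (fun r _ => by linarith [hκ r])
        have he : ∫ τ in s..s₀, (κ τ - 1) = -Θ s - (s₀ - s) := by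
          rw [intervalIntegral.integral_sub (hκc.intervalIntegrable _ _)
            intervalIntegrable_const, intervalIntegral.integral_const, smul_eq_mul,
            mul_one]
          have hsw2 : ∫ τ in s..s₀, κ τ = -Θ s := by
            simp only [hΘdef]
            exact intervalIntegral.integral_symm _ _
          rw [hsw2]
        rw [he] at h0
        linarith
      set L : ℝ := Real.pi + 1 with hLdef
      have hL1 : ψ < θ₀ + Θ (s₀ + L) := by
        have := hgrow (s₀ + L) (by linarith)
        simp only [hLdef] at this ⊢
        linarith
      have hL2 : θ₀ + Θ (s₀ - L) < ψ := by
        have := hdecr (s₀ - L) (by linarith)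
        simp only [hLdef] at this ⊢
        linarith
      have hθcont : ContinuousOn (fun s => θ₀ + Θ s) (Set.Icc (s₀ - L) (s₀ + L)) :=
        (continuous_const.add hΘc).continuousOn
      have hIVT := intermediate_value_Icc (by linarith : s₀ - L ≤ s₀ + L) hθcont
      have hψmem : ψ ∈ Set.Icc (θ₀ + Θ (s₀ - L)) (θ₀ + Θ (s₀ + L)) :=
        ⟨le_of_lt hL2, le_of_lt hL1⟩
      obtain ⟨s, _, hseq⟩ := hIVT hψmem
      have hseq' : θ₀ + Θ s = ψ := hseq
      refine ⟨s, ?_, ?_, ?_⟩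
      · rw [abs_le]
        constructor <;> linarith
      · rw [(hTθ s).2, hseq']
        simp only [hψdef]
        rw [Real.sin_add_int_mul_two_pi]
        exact hψs
      · rw [(hTθ s).1, hseq']
        simp only [hψdef]
        rw [Real.cos_add_int_mul_two_pi]
        exact hψc
    -- main argument
    show ‖z - c‖ < 1
    rcases eq_or_ne z c with hzc | hzc
    · rw [hzc, sub_self, norm_zero]
      norm_num
    · have hzcpos : 0 < ‖z - c‖ := by
        rw [norm_pos_iff]
        exact sub_ne_zero.mpr hzc
      set v : EuclideanSpace ℝ (Fin 2) := ‖z - c‖⁻¹ • (z - c) with hvdef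
      have hvi : ∀ i : Fin 2, v i = ‖z - c‖⁻¹ * (z - c) i := by
        intro i
        simp [hvdef]
      have hvunit : v 0 ^ 2 + v 1 ^ 2 = 1 := by
        have h1 : ‖v‖ = 1 := by
          rw [hvdef, norm_smul, Real.norm_eq_abs, abs_of_pos (by positivity)]
          field_simp
        have := hcn v
        rw [h1] at this
        simpa using this.symm
      obtain ⟨s, hsw, hsv0, hsv1⟩ := hcover v hvunit
      have hfrs : γ s ∈ frontier K := by rw [hγrange]; exact Set.mem_range_self s
      have hsupp := (hu (γ s) hfrs).2 z hzK
      rw [hinner] at hsupp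
      simp only [PiLp.sub_apply] at hsupp
      rw [(husn s).1, (husn s).2] at hsupp
      -- ‖z - c‖ ≤ b s
      have hnormform : ‖z - c‖ = (z - c) 0 * T1 s + (z - c) 1 * (-(T0 s)) := by
        have h0 : (z - c) 0 = ‖z - c‖ * v 0 := by
          rw [hvi 0]
          field_simp
        have h1 : (z - c) 1 = ‖z - c‖ * v 1 := by
          rw [hvi 1]
          field_simp
        rw [h0, h1, hsv0, hsv1]
        have hsq : ‖z - c‖ ^ 2 = (z - c) 0 ^ 2 + (z - c) 1 ^ 2 := hcn _
        rw [h0, h1] at hsq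
        nlinarith [hvunit]
      have hbsform : b s = (γ s 0 - c 0) * T1 s - (γ s 1 - c 1) * T0 s := rfl
      have hkey : ‖z - c‖ ≤ b s := by
        have hsplit : (z - c) 0 = (z 0 - γ s 0) + (γ s 0 - c 0) := by
          simp [PiLp.sub_apply]
        have hsplit1 : (z - c) 1 = (z 1 - γ s 1) + (γ s 1 - c 1) := by
          simp [PiLp.sub_apply]
        rw [hnormform, hsplit, hsplit1, hbsform]
        nlinarith [hsupp]
      have hb1 : b s ≤ 1 := hble s hsw
      rcases lt_or_eq_of_le (le_trans hkey hb1) with h | h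
      · exact h
      · exfalso
        have hbs1 : b s = 1 := le_antisymm hb1 (h ▸ hkey)
        have hss0 : s = s₀ := by
          by_contra hne
          exact absurd hbs1 (ne_of_lt (hbw s hne hsw))
        apply hzne
        have hz0 : (z - c) 0 = T1 s₀ := by
          have h0 : (z - c) 0 = ‖z - c‖ * v 0 := by rw [hvi 0]; field_simp
          rw [h0, h, one_mul, ← hsv0, hss0]
        have hz1 : (z - c) 1 = -(T0 s₀) := by
          have h1 : (z - c) 1 = ‖z - c‖ * v 1 := by rw [hvi 1]; field_simp
          rw [h1, h, one_mul]
          rw [hss0] at hsv1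
          linarith [hsv1]
        have hγ0 : γ s₀ 0 - c 0 = T1 s₀ := hc0
        have hγ1 : γ s₀ 1 - c 1 = -(T0 s₀) := hc1
        have hco0 : z 0 - γ s₀ 0 = 0 := by
          have hs1 : (z - c) 0 = z 0 - c 0 := by simp [PiLp.sub_apply]
          rw [hs1] at hz0
          linarith [hγ0]
        have hco1 : z 1 - γ s₀ 1 = 0 := by
          have hs1 : (z - c) 1 = z 1 - c 1 := by simp [PiLp.sub_apply]
          rw [hs1] at hz1
          linarith [hγ1]
        have hnz : ‖z - γ s₀‖ ^ 2 = 0 := by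
          rw [hcn]
          have e0 : (z - γ s₀) 0 = z 0 - γ s₀ 0 := by simp [PiLp.sub_apply]
          have e1 : (z - γ s₀) 1 = z 1 - γ s₀ 1 := by simp [PiLp.sub_apply]
          rw [e0, e1, hco0, hco1]
          norm_num
        have hnz2 : ‖z - γ s₀‖ = 0 := by
          nlinarith [norm_nonneg (z - γ s₀)]
        exact sub_eq_zero.mp (norm_eq_zero.mp hnz2)
  -- basic norm facts for solutions
  have hsol : ∀ (x : EuclideanSpace ℝ (Fin 2)) (t : ℝ),
      x ∈ frontier K → 0 ≤ t → p = x - (1 + t) • u x → ‖x - p‖ = 1 + t := by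
    intro x t hxfr ht hp
    have hxp : x - p = (1 + t) • u x := by
      rw [hp]; abel
    rw [hxp, norm_smul, (hu x hxfr).1, mul_one, Real.norm_eq_abs, abs_of_pos (by linarith)]
  -- existence
  obtain ⟨z₀, hz₀K, hz₀b⟩ := hD
  have hz₀p : 1 ≤ ‖z₀ - p‖ := by
    rw [Metric.mem_ball, dist_eq_norm] at hz₀b
    linarith [not_lt.mp hz₀b]
  obtain ⟨x₀, hx₀K, hx₀max⟩ := hKcomp.exists_isMaxOn ⟨z₀, hz₀K⟩
    ((continuous_id.sub continuous_const).norm.continuousOn :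
      ContinuousOn (fun z => ‖z - p‖) K)
  have hmax : ∀ y ∈ K, ‖y - p‖ ≤ ‖x₀ - p‖ := fun y hy => hx₀max hy
  have hr₀ : 1 ≤ ‖x₀ - p‖ := le_trans hz₀p (hmax z₀ hz₀K)
  set r₀ : ℝ := ‖x₀ - p‖ with hr₀def
  have hr₀pos : 0 < r₀ := by linarith
  have hx₀fr : x₀ ∈ frontier K := by
    by_contra hninterior
    have hx₀int : x₀ ∈ interior K := by
      rcases (hKclosed.frontier_eq ▸ hninterior : x₀ ∉ K \ interior K) with h
      simp only [Set.mem_diff, not_and, not_not] at h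
      exact h hx₀K
    obtain ⟨ε, hε, hball⟩ := Metric.isOpen_iff.mp isOpen_interior x₀ hx₀int
    set z : EuclideanSpace ℝ (Fin 2) := x₀ + (ε / 2 * r₀⁻¹) • (x₀ - p) with hzdef
    have hzK : z ∈ K := by
      apply interior_subset
      apply hball
      rw [Metric.mem_ball, dist_eq_norm]
      have : z - x₀ = (ε / 2 * r₀⁻¹) • (x₀ - p) := by rw [hzdef]; abel
      rw [this, norm_smul, Real.norm_eq_abs, abs_of_pos (by positivity)]
      have hnorm : ‖x₀ - p‖ = r₀ := rfl
      rw [hnorm, mul_assoc, inv_mul_cancel₀ (ne_of_gt hr₀pos), mul_one]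
      linarith
    have hzval : ‖z - p‖ = r₀ + ε / 2 := by
      have : z - p = (1 + ε / 2 * r₀⁻¹) • (x₀ - p) := by
        rw [hzdef, add_smul, one_smul]; abel
      rw [this, norm_smul, Real.norm_eq_abs, abs_of_pos (by positivity)]
      have hnorm : ‖x₀ - p‖ = r₀ := rfl
      rw [hnorm]
      field_simp
    have := hmax z hzK
    rw [hzval] at this
    linarith
  have hsupp₀ : ∀ y ∈ K, ⟪y - x₀, r₀⁻¹ • (x₀ - p)⟫ ≤ 0 := by
    intro y hy
    have h1 : ‖y - p‖ ^ 2 ≤ r₀ ^ 2 := by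
      have := hmax y hy
      nlinarith [norm_nonneg (y - p)]
    have h2 : ‖(y - x₀) + (x₀ - p)‖ ^ 2 = ‖y - x₀‖ ^ 2 + 2 * ⟪y - x₀, x₀ - p⟫ + ‖x₀ - p‖ ^ 2 :=
      norm_add_sq_real _ _
    have h3 : (y - x₀) + (x₀ - p) = y - p := by abel
    rw [h3] at h2
    have h4 : ⟪y - x₀, x₀ - p⟫ ≤ 0 := by nlinarith [sq_nonneg ‖y - x₀‖, norm_nonneg (y - x₀)]
    rw [real_inner_smul_right]
    have : (0:ℝ) < r₀⁻¹ := by positivity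
    nlinarith
  have hux₀ : r₀⁻¹ • (x₀ - p) = u x₀ := by
    apply huniq x₀ hx₀fr _ _ hsupp₀
    rw [norm_smul, Real.norm_eq_abs, abs_of_pos (by positivity), ← hr₀def]
    field_simp
  have hpx₀ : p = x₀ - (1 + (r₀ - 1)) • u x₀ := by
    have : (1 + (r₀ - 1)) • u x₀ = x₀ - p := by
      rw [← hux₀, smul_smul]
      have : (1 + (r₀ - 1)) * r₀⁻¹ = 1 := by field_simp; ring
      rw [this, one_smul]
    rw [this]; abel
  have hx₀D : x₀ ∈ frontier (K \ ball p 1) := by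
    constructor
    · apply subset_closure
      refine ⟨hx₀K, ?_⟩
      rw [Metric.mem_ball, dist_eq_norm]
      push_neg
      exact hr₀
    · intro hint
      exact hx₀fr.2 (interior_mono Set.diff_subset hint)
  refine ⟨(x₀, r₀ - 1), ⟨⟨hx₀fr, hx₀D⟩, by simp; linarith, hpx₀⟩, ?_⟩
  -- uniqueness
  have huniq2 : ∀ (x : EuclideanSpace ℝ (Fin 2)) (t : ℝ) (x' : EuclideanSpace ℝ (Fin 2)) (t' : ℝ),
      x ∈ frontier K → 0 ≤ t → p = x - (1 + t) • u x →
      x' ∈ frontier K → 0 ≤ t' → p = x' - (1 + t') • u x' →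
      ¬ (x ≠ x') := by
    intro x t x' t' hxfr ht hpx hx'fr ht' hpx' hne
    have key : ∀ (y : EuclideanSpace ℝ (Fin 2)) (ty : ℝ) (y' : EuclideanSpace ℝ (Fin 2)),
        y ∈ frontier K → 0 ≤ ty → p = y - (1 + ty) • u y → y' ∈ frontier K → y' ≠ y →
        ‖y' - p‖ < ‖y - p‖ := by
      intro y ty y' hyfr hty hpy hy'fr hy'ne
      obtain ⟨s₀, hs₀⟩ : y ∈ Set.range γ := hγrange ▸ hyfr
      have hblasch := hB s₀ y' (hfrK hy'fr) (by rw [hs₀]; exact hy'ne)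
      rw [hs₀] at hblasch
      have hcp : (y - u y) - p = ty • u y := by
        rw [hpy, add_smul, one_smul]; abel
      have htri : y' - p = (y' - (y - u y)) + ((y - u y) - p) := by abel
      have h1 : ‖y' - p‖ ≤ ‖y' - (y - u y)‖ + ‖(y - u y) - p‖ := by
        rw [htri]; exact norm_add_le _ _
      have h2 : ‖(y - u y) - p‖ = ty := by
        rw [hcp, norm_smul, (hu y hyfr).1, mul_one, Real.norm_eq_abs, abs_of_nonneg hty]
      have h3 : ‖y - p‖ = 1 + ty := hsol y ty hyfr hty hpy
      linarith
    have h1 := key x t x' hxfr ht hpx hx'fr (Ne.symm hne)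
    have h2 := key x' t' x hx'fr ht' hpx' hxfr hne
    linarith
  rintro ⟨x, t⟩ ⟨⟨hxfr, hxD⟩, ht, hpx⟩
  have hxx₀ : x = x₀ := by
    by_contra hne
    exact huniq2 x t x₀ (r₀ - 1) hxfr ht hpx hx₀fr (by linarith) hpx₀ hne
  have htt : t = r₀ - 1 := by
    have h1 : ‖x - p‖ = 1 + t := hsol x t hxfr ht hpx
    rw [hxx₀, ← hr₀def] at h1
    linarith
  rw [Prod.mk.injEq]  -- ⟨x,t⟩ = (x₀, r₀-1)
  exact ⟨hxx₀, htt⟩
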